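/- Let k be a commutative ring of characteristic 2. For each index i in ℤ/3 let (M_i, d_i) be a differential k-module, and let f_i : M_i → M_{i+1}, φ_i : M_i → M_{i+2}, and κ_i : M_i → M_i be k-linear maps satisfying, for every i: (1) d_{i+1} ∘ f_i = f_i ∘ d_i (each f_i is a chain map); (2) f_{i+1} ∘ f_i + d_{i+2} ∘ φ_i + φ_i ∘ d_i = 0 (f_{i+1} ∘ f_i is null-homotopic via φ_i); (3) f_{i+2} ∘ φ_i + φ_{i+1} ∘ f_i + d_i ∘ κ_i + κ_i ∘ d_i = id_{M_i} (f_{i+2} ∘ φ_i + φ_{i+1} ∘ f_i is homotopic to the identity via κ_i). Then for every i, the differential module (M_i, d_i) is homotopy equivalent to the mapping cone Cone(f_{i+1}) of f_{i+1} : M_{i+1} → M_{i+2}. -/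

import Mathlib

/-- `u` is a chain map from the differential module `(A, dA)` to `(B, dB)`. -/
def IsChainMap {k A B : Type*} [CommRing k]
    [AddCommGroup A] [Module k A] [AddCommGroup B] [Module k B]
    (dA : A →ₗ[k] A) (dB : B →ₗ[k] B) (u : A →ₗ[k] B) : Prop :=
  u ∘ₗ dA = dB ∘ₗ u

/-- The mapping cone differential (over a ring of characteristic 2) of a map
`f : (A, dA) → (B, dB)`: on `A × B` it is `(x, y) ↦ (dA x, f x + dB y)`. -/
def coneD {k A B : Type*} [CommRing k]
    [AddCommGroup A] [Module k A] [AddCommGroup B] [Module k B]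
    (dA : A →ₗ[k] A) (dB : B →ₗ[k] B) (f : A →ₗ[k] B) : (A × B) →ₗ[k] (A × B) :=
  LinearMap.prod (dA ∘ₗ LinearMap.fst k A B)
    (f ∘ₗ LinearMap.fst k A B + dB ∘ₗ LinearMap.snd k A B)

/-- `(A, dA)` and `(B, dB)` are homotopy equivalent differential modules. -/
def HomotopyEquivalent {k A B : Type*} [CommRing k]
    [AddCommGroup A] [Module k A] [AddCommGroup B] [Module k B]
    (dA : A →ₗ[k] A) (dB : B →ₗ[k] B) : Prop :=
  ∃ (u : A →ₗ[k] B) (v : B →ₗ[k] A) (H : A →ₗ[k] A) (K : B →ₗ[k] B),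
    IsChainMap dA dB u ∧ IsChainMap dB dA v ∧
    v ∘ₗ u + LinearMap.id = dA ∘ₗ H + H ∘ₗ dA ∧
    u ∘ₗ v + LinearMap.id = dB ∘ₗ K + K ∘ₗ dB

private lemma rot3 {M : Type*} [AddCommGroup M] (hM : ∀ x : M, x + x = 0) {a b c : M}
    (h : a + b + c = 0) : b = a + c := by
  have h2 : (a + b + c) + b = 0 + b := by rw [h]
  rw [show a + b + c + b = (a + c) + (b + b) by abel, hM, add_zero, zero_add] at h2
  exact h2.symm

private lemma shift4 {M : Type*} [AddCommGroup M] (hM : ∀ x : M, x + x = 0) {a b c d e : M}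
    (h : a + b + c + d = e) : a = e + (b + (c + d)) := by
  have h2 : (a + b + c + d) + (b + (c + d)) = e + (b + (c + d)) := by rw [h]
  rw [show (a + b + c + d) + (b + (c + d)) = a + ((b + b) + ((c + c) + (d + d))) by abel,
    hM, hM, hM] at h2
  simpa using h2


private lemma evN {M : Type*} [AddCommGroup M] (hM : ∀ y : M, y + y = 0)
    (n : ℕ) (x : M) (h : n % 2 = 0) : n • x = 0 := by
  obtain ⟨m, rfl⟩ := Nat.even_iff.mpr h
  rw [add_smul, hM]

private lemma odN {M : Type*} [AddCommGroup M] (hM : ∀ y : M, y + y = 0)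
    (n : ℕ) (x : M) (h : n % 2 = 1) : n • x = x := by
  obtain ⟨m, rfl⟩ := Nat.odd_iff.mpr h
  rw [add_smul, one_smul, mul_smul, two_smul, hM, zero_add]

private lemma evZ {M : Type*} [AddCommGroup M] (hM : ∀ y : M, y + y = 0)
    (n : ℤ) (x : M) (h : n % 2 = 0) : n • x = 0 := by
  obtain ⟨m, rfl⟩ := Int.even_iff.mpr h
  rw [add_smul, hM]

private lemma odZ {M : Type*} [AddCommGroup M] (hM : ∀ y : M, y + y = 0)
    (n : ℤ) (x : M) (h : n % 2 = 1) : n • x = x := by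
  obtain ⟨m, rfl⟩ := Int.odd_iff.mpr h
  rw [add_smul, one_smul, mul_smul, two_smul, hM, zero_add]

private theorem triangle_key {k A B C : Type*} [CommRing k] [CharP k 2]
    [AddCommGroup A] [Module k A] [AddCommGroup B] [Module k B]
    [AddCommGroup C] [Module k C]
    (dA : A →ₗ[k] A) (dB : B →ₗ[k] B) (dC : C →ₗ[k] C)
    (hdA : dA ∘ₗ dA = 0) (hdB : dB ∘ₗ dB = 0) (hdC : dC ∘ₗ dC = 0)
    (f0 : A →ₗ[k] B) (f1 : B →ₗ[k] C) (f2 : C →ₗ[k] A)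
    (φ0 : A →ₗ[k] C) (φ1 : B →ₗ[k] A) (φ2 : C →ₗ[k] B)
    (κ0 : A →ₗ[k] A) (κ1 : B →ₗ[k] B) (κ2 : C →ₗ[k] C)
    (h1₀ : dB ∘ₗ f0 = f0 ∘ₗ dA) (h1₁ : dC ∘ₗ f1 = f1 ∘ₗ dB) (h1₂ : dA ∘ₗ f2 = f2 ∘ₗ dC)
    (h2₀ : f1 ∘ₗ f0 + dC ∘ₗ φ0 + φ0 ∘ₗ dA = 0)
    (h2₁ : f2 ∘ₗ f1 + dA ∘ₗ φ1 + φ1 ∘ₗ dB = 0)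
    (h2₂ : f0 ∘ₗ f2 + dB ∘ₗ φ2 + φ2 ∘ₗ dC = 0)
    (h3₀ : f2 ∘ₗ φ0 + φ1 ∘ₗ f0 + dA ∘ₗ κ0 + κ0 ∘ₗ dA = LinearMap.id)
    (h3₁ : f0 ∘ₗ φ1 + φ2 ∘ₗ f1 + dB ∘ₗ κ1 + κ1 ∘ₗ dB = LinearMap.id)
    (h3₂ : f1 ∘ₗ φ2 + φ0 ∘ₗ f2 + dC ∘ₗ κ2 + κ2 ∘ₗ dC = LinearMap.id) :
    HomotopyEquivalent dA (coneD dB dC f1) := by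
  have h2k : (2 : k) = 0 := by exact_mod_cast CharP.cast_eq_zero k 2
  have chA : ∀ x : A, x + x = 0 := fun x => by
    rw [← two_smul k x, h2k, zero_smul]
  have chB : ∀ x : B, x + x = 0 := fun x => by
    rw [← two_smul k x, h2k, zero_smul]
  have chC : ∀ x : C, x + x = 0 := fun x => by
    rw [← two_smul k x, h2k, zero_smul]
  -- pointwise rewriting rules
  have R1 : ∀ x : A, dB (f0 x) = f0 (dA x) := fun x => LinearMap.congr_fun h1₀ x
  have R2 : ∀ x : B, dC (f1 x) = f1 (dB x) := fun x => LinearMap.congr_fun h1₁ x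
  have R3 : ∀ x : C, dA (f2 x) = f2 (dC x) := fun x => LinearMap.congr_fun h1₂ x
  have R4 : ∀ x : A, dC (φ0 x) = f1 (f0 x) + φ0 (dA x) := fun x =>
    rot3 chC (by simpa using LinearMap.congr_fun h2₀ x)
  have R5 : ∀ x : B, dA (φ1 x) = f2 (f1 x) + φ1 (dB x) := fun x =>
    rot3 chA (by simpa using LinearMap.congr_fun h2₁ x)
  have R6 : ∀ x : C, dB (φ2 x) = f0 (f2 x) + φ2 (dC x) := fun x =>
    rot3 chB (by simpa using LinearMap.congr_fun h2₂ x)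
  have R7 : ∀ x : A, f2 (φ0 x) = x + (φ1 (f0 x) + (dA (κ0 x) + κ0 (dA x))) := fun x =>
    shift4 chA (by simpa using LinearMap.congr_fun h3₀ x)
  have R8 : ∀ x : B, f0 (φ1 x) = x + (φ2 (f1 x) + (dB (κ1 x) + κ1 (dB x))) := fun x =>
    shift4 chB (by simpa using LinearMap.congr_fun h3₁ x)
  have R9 : ∀ x : C, f1 (φ2 x) = x + (φ0 (f2 x) + (dC (κ2 x) + κ2 (dC x))) := fun x =>
    shift4 chC (by simpa using LinearMap.congr_fun h3₂ x)
  have RA : ∀ x : A, dA (dA x) = 0 := fun x => LinearMap.congr_fun hdA x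
  have RB : ∀ x : B, dB (dB x) = 0 := fun x => LinearMap.congr_fun hdB x
  have RC : ∀ x : C, dC (dC x) = 0 := fun x => LinearMap.congr_fun hdC x
  -- the data
  set θ : B →ₗ[k] C := f1 ∘ₗ κ1 + κ2 ∘ₗ f1 + φ0 ∘ₗ φ1 with hθ
  refine ⟨LinearMap.prod f0 φ0,
    LinearMap.coprod (φ1 + f2 ∘ₗ θ) f2,
    φ1 ∘ₗ κ1 ∘ₗ f0 + f2 ∘ₗ κ2 ∘ₗ φ0 + φ1 ∘ₗ φ2 ∘ₗ φ0 + κ0 ∘ₗ dA ∘ₗ κ0 + κ0 ∘ₗ κ0 ∘ₗ dA,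
    LinearMap.prod (LinearMap.coprod (κ1 + φ2 ∘ₗ θ) φ2) (LinearMap.coprod (κ2 ∘ₗ θ) κ2),
    ?_, ?_, ?_, ?_⟩ <;>
  refine LinearMap.ext fun x => ?_ <;>
  simp only [hθ, coneD, LinearMap.comp_apply, LinearMap.add_apply, LinearMap.prod_apply,
    LinearMap.coprod_apply, LinearMap.fst_apply, LinearMap.snd_apply, LinearMap.id_apply,
    Function.prod, Prod.ext_iff, Prod.fst_add, Prod.snd_add, Prod.mk.injEq,
    map_add, map_zero] <;>
  (try refine ⟨?_, ?_⟩) <;>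
  simp only [R1, R2, R3, R4, R5, R6, R7, R8, R9, RA, RB, RC, map_add, map_zero] <;>
  (try abel_nf) <;>
  (try simp [evN chA, odN chA, evZ chA, odZ chA, evN chB, odN chB, evZ chB, odZ chB,
    evN chC, odN chC, evZ chC, odZ chC, chA, chB, chC]) <;>
  (try abel)

/-- Lemma 2.1 (triangle detection): given differential modules `M₀, M₁, M₂` indexed
cyclically by `ℤ/3`, chain maps `fᵢ : Mᵢ → Mᵢ₊₁`, homotopies `φᵢ : Mᵢ → Mᵢ₊₂` with
`fᵢ₊₁ ∘ fᵢ + d φᵢ = 0`, and homotopies `κᵢ` with `fᵢ₊₂ ∘ φᵢ + φᵢ₊₁ ∘ fᵢ + d κᵢ = id`,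
each `Mᵢ` is homotopy equivalent to the mapping cone of `fᵢ₊₁ : Mᵢ₊₁ → Mᵢ₊₂`. -/
theorem stmt0 {k M0 M1 M2 : Type*} [CommRing k] [CharP k 2]
    [AddCommGroup M0] [Module k M0] [AddCommGroup M1] [Module k M1]
    [AddCommGroup M2] [Module k M2]
    (d0 : M0 →ₗ[k] M0) (d1 : M1 →ₗ[k] M1) (d2 : M2 →ₗ[k] M2)
    (hd0 : d0 ∘ₗ d0 = 0) (hd1 : d1 ∘ₗ d1 = 0) (hd2 : d2 ∘ₗ d2 = 0)
    (f0 : M0 →ₗ[k] M1) (f1 : M1 →ₗ[k] M2) (f2 : M2 →ₗ[k] M0)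
    (φ0 : M0 →ₗ[k] M2) (φ1 : M1 →ₗ[k] M0) (φ2 : M2 →ₗ[k] M1)
    (κ0 : M0 →ₗ[k] M0) (κ1 : M1 →ₗ[k] M1) (κ2 : M2 →ₗ[k] M2)
    (h1₀ : d1 ∘ₗ f0 = f0 ∘ₗ d0) (h1₁ : d2 ∘ₗ f1 = f1 ∘ₗ d1) (h1₂ : d0 ∘ₗ f2 = f2 ∘ₗ d2)
    (h2₀ : f1 ∘ₗ f0 + d2 ∘ₗ φ0 + φ0 ∘ₗ d0 = 0)
    (h2₁ : f2 ∘ₗ f1 + d0 ∘ₗ φ1 + φ1 ∘ₗ d1 = 0)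
    (h2₂ : f0 ∘ₗ f2 + d1 ∘ₗ φ2 + φ2 ∘ₗ d2 = 0)
    (h3₀ : f2 ∘ₗ φ0 + φ1 ∘ₗ f0 + d0 ∘ₗ κ0 + κ0 ∘ₗ d0 = LinearMap.id)
    (h3₁ : f0 ∘ₗ φ1 + φ2 ∘ₗ f1 + d1 ∘ₗ κ1 + κ1 ∘ₗ d1 = LinearMap.id)
    (h3₂ : f1 ∘ₗ φ2 + φ0 ∘ₗ f2 + d2 ∘ₗ κ2 + κ2 ∘ₗ d2 = LinearMap.id) :
    HomotopyEquivalent d0 (coneD d1 d2 f1) ∧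
    HomotopyEquivalent d1 (coneD d2 d0 f2) ∧
    HomotopyEquivalent d2 (coneD d0 d1 f0) := by
  exact ⟨triangle_key d0 d1 d2 hd0 hd1 hd2 f0 f1 f2 φ0 φ1 φ2 κ0 κ1 κ2
      h1₀ h1₁ h1₂ h2₀ h2₁ h2₂ h3₀ h3₁ h3₂,
    triangle_key d1 d2 d0 hd1 hd2 hd0 f1 f2 f0 φ1 φ2 φ0 κ1 κ2 κ0
      h1₁ h1₂ h1₀ h2₁ h2₂ h2₀ h3₁ h3₂ h3₀,
    triangle_key d2 d0 d1 hd2 hd0 hd1 f2 f0 f1 φ2 φ0 φ1 κ2 κ0 κ1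
      h1₂ h1₀ h1₁ h2₂ h2₀ h2₁ h3₂ h3₀ h3₁⟩
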